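/- Let n ≥ 1 and let D = (1/(2n−1)!!)·∏_{k=1}^{n} (sinh r·(d/dr) + (2k−1)·cosh r), the composition taken with smaller values of k to the left (the k = 1 factor applied last). Then for every smooth function f : ℝ → ℂ and every r ∈ ℝ with r ≠ 0: D applied to the function s ↦ f″(s) + 2n·(cosh s/sinh s)·f′(s), evaluated at r, equals (Df)″(r) − n²·(Df)(r). -/

import Mathlib

/-- The factor `A_k` given by `(A_k g)(r) = sinh r · g'(r) + (2k-1) cosh r · g(r)`. -/
noncomputable def Ahyp (k : ℕ) (g : ℝ → ℂ) : ℝ → ℂ :=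
  fun r => (Real.sinh r : ℂ) * deriv g r + (2 * (k : ℂ) - 1) * (Real.cosh r : ℂ) * g r

/-- `AhypChain n f = A₁(A₂(⋯(Aₙ f)⋯))`, the composition with smaller indices to
the left. -/
noncomputable def AhypChain : ℕ → (ℝ → ℂ) → (ℝ → ℂ)
  | 0, f => f
  | n + 1, f => AhypChain n (Ahyp (n + 1) f)

/-- The shift operator `D = (1/(2n-1)!!) ∏_{k=1}^n (sinh r d/dr + (2k-1) cosh r)`. -/
noncomputable def Dhyp (n : ℕ) (f : ℝ → ℂ) : ℝ → ℂ :=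
  fun r => ((Nat.doubleFactorial (2 * n - 1) : ℂ))⁻¹ * AhypChain n f r

namespace StmtAux

open Real

/-- The punctured line. -/
def U : Set ℝ := {x | x ≠ 0}

lemma hUopen : IsOpen U := isOpen_ne

lemma hasDerivAt_sh (s : ℝ) :
    HasDerivAt (fun t : ℝ => (Real.sinh t : ℂ)) ((Real.cosh s : ℂ)) s :=
  (Real.hasDerivAt_sinh s).ofReal_comp

lemma hasDerivAt_ch (s : ℝ) :
    HasDerivAt (fun t : ℝ => (Real.cosh t : ℂ)) ((Real.sinh s : ℂ)) s :=
  (Real.hasDerivAt_cosh s).ofReal_comp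

lemma contDiff_shC : ContDiff ℝ (⊤ : ℕ∞) (fun t : ℝ => (Real.sinh t : ℂ)) :=
  Complex.ofRealCLM.contDiff.comp Real.contDiff_sinh

lemma contDiff_chC : ContDiff ℝ (⊤ : ℕ∞) (fun t : ℝ => (Real.cosh t : ℂ)) :=
  Complex.ofRealCLM.contDiff.comp Real.contDiff_cosh

/-- From smoothness on the open set `U`, extract `HasDerivAt` at points of `U`. -/
lemma hdg {g : ℝ → ℂ} (hg : ContDiffOn ℝ (⊤ : ℕ∞) g U) {s : ℝ} (hs : s ∈ U) :
    HasDerivAt g (deriv g s) s :=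
  ((hg.contDiffAt (hUopen.mem_nhds hs)).differentiableAt (by simp)).hasDerivAt

lemma hg_deriv {g : ℝ → ℂ} (hg : ContDiffOn ℝ (⊤ : ℕ∞) g U) :
    ContDiffOn ℝ (⊤ : ℕ∞) (deriv g) U :=
  hg.deriv_of_isOpen hUopen (by exact_mod_cast le_top)

lemma Ahyp_contDiffOn {g : ℝ → ℂ} (hg : ContDiffOn ℝ (⊤ : ℕ∞) g U) (k : ℕ) :
    ContDiffOn ℝ (⊤ : ℕ∞) (Ahyp k g) U := by
  unfold Ahyp
  exact (contDiff_shC.contDiffOn.mul (hg_deriv hg)).add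
    ((contDiffOn_const.mul contDiff_chC.contDiffOn).mul hg)

lemma Ahyp_congr {g h : ℝ → ℂ} (hgh : ∀ x ∈ U, g x = h x) (k : ℕ) :
    ∀ x ∈ U, Ahyp k g x = Ahyp k h x := by
  intro x hx
  have hev : g =ᶠ[nhds x] h := Filter.eventuallyEq_of_mem (hUopen.mem_nhds hx) hgh
  simp only [Ahyp, hev.deriv_eq, hgh x hx]

lemma AhypChain_congr :
    ∀ (k : ℕ) {g h : ℝ → ℂ}, (∀ x ∈ U, g x = h x) →
      ∀ r ∈ U, AhypChain k g r = AhypChain k h r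
  | 0, _, _, hgh, r, hr => hgh r hr
  | (k + 1), _, _, hgh, r, hr => AhypChain_congr k (Ahyp_congr hgh (k + 1)) r hr

lemma hasDerivAt_Ahyp {g : ℝ → ℂ} (hg : ContDiffOn ℝ (⊤ : ℕ∞) g U) (k : ℕ)
    {s : ℝ} (hs : s ∈ U) :
    HasDerivAt (Ahyp k g)
      ((Real.cosh s : ℂ) * deriv g s + (Real.sinh s : ℂ) * deriv (deriv g) s
        + (2 * (k : ℂ) - 1) * ((Real.sinh s : ℂ) * g s + (Real.cosh s : ℂ) * deriv g s)) s := by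
  have h0 := hdg hg hs
  have h1 := hdg (hg_deriv hg) hs
  have H := ((hasDerivAt_sh s).mul h1).add
    ((((hasDerivAt_ch s).const_mul ((2 : ℂ) * (k : ℂ) - 1)).mul h0))
  unfold Ahyp
  convert H using 1
  · rfl
  · rfl
  · ring

lemma deriv_Ahyp {g : ℝ → ℂ} (hg : ContDiffOn ℝ (⊤ : ℕ∞) g U) (k : ℕ)
    {s : ℝ} (hs : s ∈ U) :
    deriv (Ahyp k g) s
      = (Real.cosh s : ℂ) * deriv g s + (Real.sinh s : ℂ) * deriv (deriv g) s
        + (2 * (k : ℂ) - 1) * ((Real.sinh s : ℂ) * g s + (Real.cosh s : ℂ) * deriv g s) :=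
  (hasDerivAt_Ahyp hg k hs).deriv

/-- The key commutation identity:
`A_{k+1} ∘ (L_{k+1} + c) = (L_k + c - (2k+1)) ∘ A_{k+1}` on the punctured line. -/
lemma key {g : ℝ → ℂ} (hg : ContDiffOn ℝ (⊤ : ℕ∞) g U) (k : ℕ) (c : ℂ)
    {x : ℝ} (hx : x ∈ U) :
    Ahyp (k + 1) (fun s => deriv (deriv g) s
        + 2 * (((k : ℕ) + 1 : ℕ) : ℂ) * ((Real.cosh s : ℂ) / (Real.sinh s : ℂ)) * deriv g s
        + c * g s) x
      = deriv (deriv (Ahyp (k + 1) g)) x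
        + 2 * (k : ℂ) * ((Real.cosh x : ℂ) / (Real.sinh x : ℂ)) * deriv (Ahyp (k + 1) g) x
        + (c - (2 * (k : ℂ) + 1)) * Ahyp (k + 1) g x := by
  have hg1 := hg_deriv hg
  have hg2 := hg_deriv hg1
  have h0 := hdg hg hx
  have h1 := hdg hg1 hx
  have h2 := hdg hg2 hx
  have hS : (Real.sinh x : ℂ) ≠ 0 := Complex.ofReal_ne_zero.mpr (Real.sinh_ne_zero.2 hx)
  -- derivative of the big L-function at x
  have hquot : HasDerivAt (fun s : ℝ => (Real.cosh s : ℂ) / (Real.sinh s : ℂ))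
      (((Real.sinh x : ℂ) * (Real.sinh x : ℂ) - (Real.cosh x : ℂ) * (Real.cosh x : ℂ))
        / (Real.sinh x : ℂ) ^ 2) x := (hasDerivAt_ch x).div (hasDerivAt_sh x) hS
  have hF : HasDerivAt (fun s => deriv (deriv g) s
      + 2 * (((k : ℕ) + 1 : ℕ) : ℂ) * ((Real.cosh s : ℂ) / (Real.sinh s : ℂ)) * deriv g s
      + c * g s)
      (deriv (deriv (deriv g)) x
        + 2 * (((k : ℕ) + 1 : ℕ) : ℂ)
          * ((((Real.sinh x : ℂ) * (Real.sinh x : ℂ)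
              - (Real.cosh x : ℂ) * (Real.cosh x : ℂ)) / (Real.sinh x : ℂ) ^ 2) * deriv g x
            + ((Real.cosh x : ℂ) / (Real.sinh x : ℂ)) * deriv (deriv g) x)
        + c * deriv g x) x := by
    have hmid : HasDerivAt
        (fun s => 2 * (((k : ℕ) + 1 : ℕ) : ℂ)
          * ((Real.cosh s : ℂ) / (Real.sinh s : ℂ)) * deriv g s)
        (2 * (((k : ℕ) + 1 : ℕ) : ℂ)
          * ((((Real.sinh x : ℂ) * (Real.sinh x : ℂ)
              - (Real.cosh x : ℂ) * (Real.cosh x : ℂ)) / (Real.sinh x : ℂ) ^ 2) * deriv g x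
            + ((Real.cosh x : ℂ) / (Real.sinh x : ℂ)) * deriv (deriv g) x)) x := by
      have := (hquot.mul h1).const_mul (2 * (((k : ℕ) + 1 : ℕ) : ℂ))
      convert this using 2
      · rfl
      · simp only [Pi.mul_apply]; ring
    exact (h2.add hmid).add (h0.const_mul c)
  -- second derivative of h := Ahyp (k+1) g at x
  have hev : deriv (Ahyp (k + 1) g) =ᶠ[nhds x] fun s =>
      (Real.cosh s : ℂ) * deriv g s + (Real.sinh s : ℂ) * deriv (deriv g) s
        + (2 * (((k : ℕ) + 1 : ℕ) : ℂ) - 1)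
          * ((Real.sinh s : ℂ) * g s + (Real.cosh s : ℂ) * deriv g s) :=
    Filter.eventuallyEq_of_mem (hUopen.mem_nhds hx)
      (fun y hy => deriv_Ahyp hg (k + 1) hy)
  have hphi : HasDerivAt (fun s =>
      (Real.cosh s : ℂ) * deriv g s + (Real.sinh s : ℂ) * deriv (deriv g) s
        + (2 * (((k : ℕ) + 1 : ℕ) : ℂ) - 1)
          * ((Real.sinh s : ℂ) * g s + (Real.cosh s : ℂ) * deriv g s))
      (((Real.sinh x : ℂ) * deriv g x + (Real.cosh x : ℂ) * deriv (deriv g) x)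
        + ((Real.cosh x : ℂ) * deriv (deriv g) x + (Real.sinh x : ℂ) * deriv (deriv (deriv g)) x)
        + (2 * (((k : ℕ) + 1 : ℕ) : ℂ) - 1)
          * (((Real.cosh x : ℂ) * g x + (Real.sinh x : ℂ) * deriv g x)
            + ((Real.sinh x : ℂ) * deriv g x + (Real.cosh x : ℂ) * deriv (deriv g) x))) x :=
    (((hasDerivAt_ch x).mul h1).add ((hasDerivAt_sh x).mul h2)).add
      ((((hasDerivAt_sh x).mul h0).add ((hasDerivAt_ch x).mul h1)).const_mul
        (2 * (((k : ℕ) + 1 : ℕ) : ℂ) - 1))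
  have hdd : deriv (deriv (Ahyp (k + 1) g)) x
      = ((Real.sinh x : ℂ) * deriv g x + (Real.cosh x : ℂ) * deriv (deriv g) x)
        + ((Real.cosh x : ℂ) * deriv (deriv g) x + (Real.sinh x : ℂ) * deriv (deriv (deriv g)) x)
        + (2 * (((k : ℕ) + 1 : ℕ) : ℂ) - 1)
          * (((Real.cosh x : ℂ) * g x + (Real.sinh x : ℂ) * deriv g x)
            + ((Real.sinh x : ℂ) * deriv g x + (Real.cosh x : ℂ) * deriv (deriv g) x)) := by
    rw [hev.deriv_eq]; exact hphi.deriv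
  rw [hdd, deriv_Ahyp hg (k + 1) hx]
  simp only [Ahyp, hF.deriv]
  push_cast at hS ⊢
  field_simp
  ring

/-- Main induction:
`A₁⋯A_k ∘ (L_k + c) = (d²/dr² + c - k²) ∘ A₁⋯A_k` on the punctured line. -/
lemma main_ind : ∀ (k : ℕ) {g : ℝ → ℂ}, ContDiffOn ℝ (⊤ : ℕ∞) g U → ∀ (c : ℂ), ∀ r ∈ U,
    AhypChain k (fun s => deriv (deriv g) s
        + 2 * (k : ℂ) * ((Real.cosh s : ℂ) / (Real.sinh s : ℂ)) * deriv g s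
        + c * g s) r
      = deriv (deriv (AhypChain k g)) r + (c - (k : ℂ) ^ 2) * AhypChain k g r := by
  intro k
  induction k with
  | zero =>
    intro g hg c r hr
    simp only [AhypChain]
    push_cast
    ring
  | succ k ih =>
    intro g hg c r hr
    have hh : ContDiffOn ℝ (⊤ : ℕ∞) (Ahyp (k + 1) g) U := Ahyp_contDiffOn hg (k + 1)
    show AhypChain k (Ahyp (k + 1) (fun s => deriv (deriv g) s
        + 2 * (((k : ℕ) + 1 : ℕ) : ℂ) * ((Real.cosh s : ℂ) / (Real.sinh s : ℂ)) * deriv g s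
        + c * g s)) r = _
    rw [AhypChain_congr k (fun x hx => key hg k c hx) r hr,
      ih hh (c - (2 * (k : ℂ) + 1)) r hr]
    simp only [AhypChain]
    push_cast
    ring

end StmtAux

/-- Intertwining property of `D` with the radial hyperbolic Laplacian on
`H^{2n+1}`. -/
theorem stmt_2 (n : ℕ) (hn : 1 ≤ n) (f : ℝ → ℂ) (hf : ContDiff ℝ (⊤ : ℕ∞) f)
    (r : ℝ) (hr : r ≠ 0) :
    Dhyp n (fun s => deriv (deriv f) s
        + 2 * (n : ℂ) * ((Real.cosh s : ℂ) / (Real.sinh s : ℂ)) * deriv f s) r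
      = deriv (deriv (Dhyp n f)) r - (n : ℂ) ^ 2 * Dhyp n f r := by
  have hrU : r ∈ StmtAux.U := hr
  have hfU : ContDiffOn ℝ (⊤ : ℕ∞) f StmtAux.U := hf.contDiffOn
  have hcongr : ∀ x ∈ StmtAux.U,
      (fun s => deriv (deriv f) s
        + 2 * (n : ℂ) * ((Real.cosh s : ℂ) / (Real.sinh s : ℂ)) * deriv f s) x
      = (fun s => deriv (deriv f) s
        + 2 * (n : ℂ) * ((Real.cosh s : ℂ) / (Real.sinh s : ℂ)) * deriv f s
        + (0 : ℂ) * f s) x := by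
    intro x _; simp
  have hmain := StmtAux.main_ind n hfU 0 r hrU
  have hD1 : deriv (Dhyp n f)
      = fun x => ((Nat.doubleFactorial (2 * n - 1) : ℂ))⁻¹ * deriv (AhypChain n f) x := by
    funext x
    exact deriv_const_mul_field _
  have hD2 : deriv (deriv (Dhyp n f)) r
      = ((Nat.doubleFactorial (2 * n - 1) : ℂ))⁻¹ * deriv (deriv (AhypChain n f)) r := by
    rw [hD1]
    exact deriv_const_mul_field _
  have hlhs : Dhyp n (fun s => deriv (deriv f) s
      + 2 * (n : ℂ) * ((Real.cosh s : ℂ) / (Real.sinh s : ℂ)) * deriv f s) r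
      = ((Nat.doubleFactorial (2 * n - 1) : ℂ))⁻¹
        * (deriv (deriv (AhypChain n f)) r + (0 - (n : ℂ) ^ 2) * AhypChain n f r) := by
    unfold Dhyp
    rw [StmtAux.AhypChain_congr n hcongr r hrU, hmain]
  rw [hlhs, hD2]
  unfold Dhyp
  ring
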